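/- Let 𝓛 = L{{T_1}}…{{T_{d−1}}} with L/S a finite extension of local fields. Then R_{𝓛,1} = { x ∈ 𝓛 : v_𝓛(x) ≥ −v_L(D(L/S)) − ⌊v_L(p)/(p−1)⌋ − 1 }, where D(L/S) is the different of the extension L/S and v_𝓛 is the discrete valuation of 𝓛 (which restricts to v_L on L). -/

import Mathlib

/-- Axioms for a (rank-one) discrete valuation `v` on a field `F`, written additively with
`v 0 = ⊤` and value group `ℤ`. -/
structure IsDiscVal {F : Type*} [Field F] (v : F → WithTop ℤ) : Prop where
  eq_top_iff : ∀ x, v x = ⊤ ↔ x = 0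
  map_mul : ∀ x y, v (x * y) = v x + v y
  min_le_add : ∀ x y, min (v x) (v y) ≤ v (x + y)
  exists_uniformizer : ∃ x, v x = 1

namespace IsDiscVal

variable {F : Type*} [Field F] {v : F → WithTop ℤ}

theorem v_one (hv : IsDiscVal v) : v 1 = 0 := by
  have h1 : v 1 ≠ ⊤ := fun h => one_ne_zero ((hv.eq_top_iff 1).mp h)
  obtain ⟨n, hn⟩ := WithTop.ne_top_iff_exists.mp h1
  have hmul := hv.map_mul 1 1
  rw [mul_one, ← hn] at hmul
  have hn0 : n = n + n := by exact_mod_cast hmul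
  have : n = 0 := by omega
  simp [← hn, this]

theorem v_neg_one (hv : IsDiscVal v) : v (-1) = 0 := by
  have h1 : v (-1) ≠ ⊤ := fun h => (by simp : (-1 : F) ≠ 0) ((hv.eq_top_iff (-1)).mp h)
  obtain ⟨n, hn⟩ := WithTop.ne_top_iff_exists.mp h1
  have hmul := hv.map_mul (-1) (-1)
  rw [neg_one_mul, neg_neg, hv.v_one, ← hn] at hmul
  have hn0 : n + n = (0 : ℤ) := by exact_mod_cast hmul.symm
  have : n = 0 := by omega
  simp [← hn, this]

theorem v_neg (hv : IsDiscVal v) (x : F) : v (-x) = v x := by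
  have h := hv.map_mul (-1) x
  rw [neg_one_mul, hv.v_neg_one, zero_add] at h
  exact h

theorem v_zero (hv : IsDiscVal v) : v 0 = ⊤ := (hv.eq_top_iff 0).mpr rfl

/-- The valuation (sub)ring `O = {x | v x ≥ 0}` of a discretely valued field. -/
noncomputable def subring (hv : IsDiscVal v) : Subring F where
  carrier := {x | 0 ≤ v x}
  zero_mem' := by simp only [Set.mem_setOf_eq, hv.v_zero]; exact le_top
  one_mem' := by simp [Set.mem_setOf_eq, hv.v_one]
  add_mem' := fun {a b} ha hb => le_trans (le_min ha hb) (hv.min_le_add a b)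
  mul_mem' := fun {a b} ha hb => by
    simpa [Set.mem_setOf_eq, hv.map_mul a b] using add_nonneg ha hb
  neg_mem' := fun {a} ha => by
    simpa only [Set.mem_setOf_eq, hv.v_neg a] using ha

theorem mem_subring_iff (hv : IsDiscVal v) (x : F) : x ∈ hv.subring ↔ 0 ≤ v x := Iff.rfl

end IsDiscVal

universe u

/-- Axiomatization of the two-dimensional step `F = E{{T}}`: the complete discrete valuation
field of series `Σ_{i ∈ ℤ} a_i T^i` with `a_i ∈ E`, `inf_i v_E(a_i) > −∞` and
`v_E(a_i) → +∞` as `i → −∞`, with `v_F(x) = min_i v_E(a_i)`. -/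
structure AmpleStr (E : Type u) (F : Type u) [Field E] [Field F]
    (vE : E → WithTop ℤ) (vF : F → WithTop ℤ) where
  /-- the inclusion `E ⊆ E{{T}}` -/
  emb : E →+* F
  /-- the variable `T` -/
  T : F
  /-- the coefficient functionals `x = Σ a_i T^i ↦ a_i` -/
  coeff : ℤ → F →+ E
  coeff_emb : ∀ (a : E) (i : ℤ), coeff i (emb a) = if i = 0 then a else 0
  coeff_emb_mul : ∀ (a : E) (x : F) (i : ℤ), coeff i (emb a * x) = a * coeff i x
  coeff_mul_T : ∀ (x : F) (i : ℤ), coeff i (x * T) = coeff (i - 1) x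
  coeff_inj : ∀ x y : F, (∀ i, coeff i x = coeff i y) → x = y
  v_isLeast : ∀ x : F, x ≠ 0 → IsLeast (Set.range fun i => vE (coeff i x)) (vF x)
  complete : ∀ f : ℤ → E,
      (∃ c : ℤ, ∀ i, (c : WithTop ℤ) ≤ vE (f i)) →
      (∀ M : ℤ, ∃ N : ℤ, ∀ i ≤ N, (M : WithTop ℤ) ≤ vE (f i)) →
      ∃ x : F, ∀ i, coeff i x = f i

/-- Axiomatization of the standard `d`-dimensional local field
`𝓚 = L{{T_1}}…{{T_{d−1}}}` over the complete discrete valuation field `L`, presented as a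
tower of fields `F 0 = L`, `F (j+1) = (F j){{T_{j+1}}}`, with top `F (d−1) = 𝓚`. -/
structure AmpleTower (d : ℕ) (L : Type u) [Field L] (vL : L → WithTop ℤ)
    (𝓚 : Type u) [Field 𝓚] (v𝓚 : 𝓚 → WithTop ℤ) where
  F : ℕ → Type u
  field : ∀ j, Field (F j)
  v : ∀ j, F j → WithTop ℤ
  baseEquiv : letI := field 0; L ≃+* F 0
  v_base : ∀ x : L, v 0 (baseEquiv x) = vL x
  step : ∀ j, j < d - 1 →
    @AmpleStr (F j) (F (j + 1)) (field j) (field (j + 1)) (v j) (v (j + 1))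
  topEquiv : letI := field (d - 1); F (d - 1) ≃+* 𝓚
  v_top : ∀ x, v𝓚 (topEquiv x) = v (d - 1) x

attribute [instance] AmpleTower.field

namespace AmpleTower

variable {d : ℕ} {L 𝓚 : Type u} [Field L] [Field 𝓚]
  {vL : L → WithTop ℤ} {v𝓚 : 𝓚 → WithTop ℤ}

/-- Iterated extraction of the constant coefficient, down the tower. -/
noncomputable def cc (tw : AmpleTower d L vL 𝓚 v𝓚) :
    ∀ j, j ≤ d - 1 → tw.F j → L
  | 0, _, x => tw.baseEquiv.symm x
  | j + 1, h, x => tw.cc j (by omega) ((tw.step j (by omega)).coeff 0 x)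

/-- The constant-coefficient map `c_{𝓚/L} : 𝓚 → L` (the coefficient of
`T_1^0 ⋯ T_{d−1}^0`). -/
noncomputable def constCoeff (tw : AmpleTower d L vL 𝓚 v𝓚) : 𝓚 → L :=
  fun x => tw.cc (d - 1) le_rfl (tw.topEquiv.symm x)

/-- Embedding of an intermediate field of the tower into the top field. -/
noncomputable def upHom (tw : AmpleTower d L vL 𝓚 v𝓚) :
    ∀ m, m ≤ d - 1 → (tw.F m →+* tw.F (d - 1))
  | m, _h =>
    if hm : m = d - 1 then cast (by subst hm; rfl) (RingHom.id (tw.F m))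
    else (tw.upHom (m + 1) (by omega)).comp (tw.step m (by omega)).emb
  termination_by m => d - 1 - m
  decreasing_by omega

/-- The local uniformizers `T_1, …, T_{d−1}` of `𝓚` (as elements of the top field);
here `0 ≤ j < d − 1` indexes `T_{j+1}`. -/
noncomputable def Tvar (tw : AmpleTower d L vL 𝓚 v𝓚) (j : ℕ) (h : j < d - 1) : 𝓚 :=
  tw.topEquiv (tw.upHom (j + 1) (by omega) ((tw.step j h).T))

/-- The inclusion `L ⊆ 𝓚`, as a ring homomorphism. -/
noncomputable def embL (tw : AmpleTower d L vL 𝓚 v𝓚) : L →+* 𝓚 :=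
  (tw.topEquiv.toRingHom.comp (tw.upHom 0 (Nat.zero_le _))).comp tw.baseEquiv.toRingHom

end AmpleTower

namespace StepAux

variable {E F : Type u} [Field E] [Field F] {vE : E → WithTop ℤ} {vF : F → WithTop ℤ}
  (st : AmpleStr E F vE vF)

lemma T_ne_zero : st.T ≠ 0 := by
  intro h
  have h1 : st.coeff 1 st.T = 0 := by rw [h]; exact map_zero _
  have h2 : st.coeff 1 st.T = 1 := by
    have h3 := st.coeff_mul_T (st.emb 1) 1
    have h4 : st.coeff 1 st.T = st.coeff 1 (st.emb 1 * st.T) := by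
      rw [map_one, one_mul]
    rw [h4, h3, st.coeff_emb]
    norm_num
  rw [h1] at h2; exact zero_ne_one h2

lemma coeff_mul_Tinv (x : F) (i : ℤ) : st.coeff i (x * st.T⁻¹) = st.coeff (i + 1) x := by
  have := st.coeff_mul_T (x * st.T⁻¹) (i + 1)
  rw [mul_assoc, inv_mul_cancel₀ (T_ne_zero st), mul_one] at this
  simpa using this.symm

lemma coeff_mul_zpow (n : ℤ) (x : F) (i : ℤ) :
    st.coeff i (x * st.T ^ n) = st.coeff (i - n) x := by
  induction n using Int.induction_on generalizing i with
  | zero => simp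
  | succ k ih =>
      rw [zpow_add_one₀ (T_ne_zero st), ← mul_assoc, st.coeff_mul_T, ih]
      ring_nf
  | pred k ih =>
      rw [zpow_sub_one₀ (T_ne_zero st), ← mul_assoc, coeff_mul_Tinv st, ih]
      ring_nf

lemma coeff_emb_mul_zpow (y : E) (n i : ℤ) :
    st.coeff i (st.emb y * st.T ^ n) = if i = n then y else 0 := by
  rw [coeff_mul_zpow st, st.coeff_emb]
  rcases eq_or_ne i n with h | h
  · simp [h]
  · rw [if_neg (sub_ne_zero_of_ne h), if_neg h]

lemma exists_coeff_ne_zero {x : F} (hx : x ≠ 0) : ∃ i, st.coeff i x ≠ 0 := by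
  by_contra h
  push_neg at h
  exact hx (st.coeff_inj x 0 (fun i => by rw [h i, map_zero]))

lemma vF_le {x : F} (hx : x ≠ 0) (i : ℤ) : vF x ≤ vE (st.coeff i x) :=
  (st.v_isLeast x hx).2 ⟨i, rfl⟩

lemma v_single (hZ : vE 0 = ⊤) {x : F} {k : ℤ} {y : E} (hy : vE y ≠ ⊤)
    (hc : ∀ m, st.coeff m x = if m = k then y else 0) : vF x = vE y := by
  have hy0 : y ≠ 0 := fun h => hy (h ▸ hZ)
  have hx : x ≠ 0 := by
    intro h
    have := hc k
    rw [h, map_zero, if_pos rfl] at this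
    exact hy0 this.symm
  have hle : vF x ≤ vE y := by
    have := vF_le st hx k
    rwa [hc k, if_pos rfl] at this
  obtain ⟨m, hm'⟩ := (st.v_isLeast x hx).1
  have hm : vE (st.coeff m x) = vF x := hm'
  rw [hc m] at hm
  by_cases hmk : m = k
  · rw [if_pos hmk] at hm; exact hm.symm
  · rw [if_neg hmk, hZ] at hm
    exact absurd (top_le_iff.mp (hm ▸ hle)) hy

/-- value of `emb y`: min of `vE y` and `vE 0`. -/
lemma v_emb {y : E} (hy : y ≠ 0) : vF (st.emb y) = min (vE y) (vE 0) := by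
  have hx : st.emb y ≠ 0 := by
    intro h
    have := st.coeff_emb y 0
    rw [h, map_zero, if_pos rfl] at this
    exact hy this.symm
  have h2 := vF_le st hx
  have hle1 : vF (st.emb y) ≤ vE y := by have := h2 0; rwa [st.coeff_emb, if_pos rfl] at this
  have hle0 : vF (st.emb y) ≤ vE 0 := by
    have := h2 1; rwa [st.coeff_emb, if_neg (by norm_num)] at this
  obtain ⟨m, hm'⟩ := (st.v_isLeast (st.emb y) hx).1
  have hm : vE (st.coeff m (st.emb y)) = vF (st.emb y) := hm'
  rw [st.coeff_emb] at hm
  refine le_antisymm (le_min hle1 hle0) ?_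
  by_cases hm0 : m = 0
  · rw [if_pos hm0] at hm; rw [← hm]; exact min_le_left _ _
  · rw [if_neg hm0] at hm; rw [← hm]; exact min_le_right _ _

end StepAux

lemma IsDiscVal_zpow {K : Type u} [Field K] {v : K → WithTop ℤ} (hv : IsDiscVal v)
    {u : K} (hu : v u = 1) (n : ℤ) : v (u ^ n) = (n : WithTop ℤ) := by
  have hu0 : u ≠ 0 := by
    intro h
    rw [h, hv.v_zero] at hu
    exact (by simp : (⊤ : WithTop ℤ) ≠ 1) hu
  have hinv : v u⁻¹ = ((-1 : ℤ) : WithTop ℤ) := by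
    have h0 := hv.map_mul u u⁻¹
    rw [mul_inv_cancel₀ hu0, hv.v_one, hu] at h0
    have hne : v u⁻¹ ≠ ⊤ := by
      intro h
      rw [h] at h0
      simp at h0
    obtain ⟨t, ht⟩ := WithTop.ne_top_iff_exists.mp hne
    rw [← ht] at h0
    have ht2 : (0 : ℤ) = 1 + t := by exact_mod_cast h0
    have ht3 : t = -1 := by omega
    rw [← ht, ht3]
  induction n using Int.induction_on with
  | zero => rw [zpow_zero, hv.v_one]; exact WithTop.coe_zero.symm
  | succ k ihk =>
      rw [zpow_add_one₀ hu0, hv.map_mul, ihk, hu]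
      have : ((1 : WithTop ℤ)) = ((1 : ℤ) : WithTop ℤ) := by simp
      rw [this, ← WithTop.coe_add]
      try first | rfl | norm_cast
  | pred k ihk =>
      rw [zpow_sub_one₀ hu0, hv.map_mul, ihk, hinv, ← WithTop.coe_add]
      try first | rfl | (norm_cast; try omega)

section TowerAux

variable {d : ℕ} {L 𝓛 : Type u} [Field L] [Field 𝓛]
  {vL : L → WithTop ℤ} {v𝓛 : 𝓛 → WithTop ℤ}

namespace TowerAux

open StepAux

/-- inclusion `L → F j` -/
noncomputable def embTo (tw : AmpleTower d L vL 𝓛 v𝓛) :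
    ∀ j, j ≤ d - 1 → (L →+* tw.F j)
  | 0, _ => tw.baseEquiv.toRingHom
  | j + 1, _h => ((tw.step j (by omega)).emb).comp (embTo tw j (by omega))

/-- min of `v j' 0` over `j' < j` -/
noncomputable def Dmin (tw : AmpleTower d L vL 𝓛 v𝓛) :
    ∀ j, j ≤ d - 1 → WithTop ℤ
  | 0, _ => ⊤
  | j + 1, _ => min (Dmin tw j (by omega)) (tw.v j 0)

variable (tw : AmpleTower d L vL 𝓛 v𝓛)

lemma cc_zero : ∀ j (h : j ≤ d - 1), tw.cc j h 0 = 0 := by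
  intro j
  induction j with
  | zero => intro h; simp [AmpleTower.cc]
  | succ j ih => intro h; simp [AmpleTower.cc, ih]

lemma v_base' (x : tw.F 0) : tw.v 0 x = vL (tw.baseEquiv.symm x) := by
  have h := tw.v_base (tw.baseEquiv.symm x)
  rwa [RingEquiv.apply_symm_apply] at h

lemma v_top' (x : 𝓛) : v𝓛 x = tw.v (d-1) (tw.topEquiv.symm x) := by
  have h := tw.v_top (tw.topEquiv.symm x)
  rw [RingEquiv.apply_symm_apply] at h
  exact h

lemma embTo_ne_zero (j : ℕ) (h : j ≤ d - 1) {a : L} (ha : a ≠ 0) :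
    embTo tw j h a ≠ 0 := by
  intro h0
  exact ha ((embTo tw j h).injective (by rw [h0, map_zero]))

lemma embTo_v (hvL : IsDiscVal vL) :
    ∀ j (h : j ≤ d - 1) (a : L), a ≠ 0 →
      tw.v j (embTo tw j h a) = min (vL a) (Dmin tw j h) := by
  intro j
  induction j with
  | zero =>
      intro h a ha
      show tw.v 0 (tw.baseEquiv a) = _
      rw [tw.v_base a]
      show _ = min (vL a) ⊤
      exact (min_eq_left le_top).symm
  | succ j ih =>
      intro h a ha
      have hj : j ≤ d - 1 := by omega
      have hlt : j < d - 1 := by omega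
      show tw.v (j+1) ((tw.step j hlt).emb (embTo tw j hj a)) = _
      rw [v_emb (tw.step j hlt) (embTo_ne_zero tw j hj ha), ih hj a ha]
      show _ = min (vL a) (min (Dmin tw j hj) (tw.v j 0))
      rw [min_assoc]

lemma Dmin_top (hvL : IsDiscVal vL) (hv𝓛 : IsDiscVal v𝓛) :
    Dmin tw (d-1) le_rfl = ⊤ := by
  by_contra hne
  obtain ⟨c, hc⟩ := WithTop.ne_top_iff_exists.mp hne
  obtain ⟨u, hu⟩ := hvL.exists_uniformizer
  have hu0 : u ≠ 0 := by
    intro h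
    rw [h, hvL.v_zero] at hu
    exact (by simp : (⊤ : WithTop ℤ) ≠ 1) hu
  set φ : L →+* 𝓛 := tw.topEquiv.toRingHom.comp (embTo tw (d-1) le_rfl) with hφ
  have key : ∀ a : L, a ≠ 0 → v𝓛 (φ a) = min (vL a) ((c : WithTop ℤ)) := by
    intro a ha
    show v𝓛 (tw.topEquiv (embTo tw (d-1) le_rfl a)) = _
    rw [tw.v_top, embTo_v tw hvL (d-1) le_rfl a ha, hc]
  set k : ℤ := c.natAbs + 1 with hk
  have h1 : v𝓛 (φ (u ^ k)) = min ((k : WithTop ℤ)) (c : WithTop ℤ) := by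
    rw [key _ (zpow_ne_zero _ hu0), IsDiscVal_zpow hvL hu]
  have h2 : v𝓛 (φ (u ^ (-k))) = min (((-k : ℤ) : WithTop ℤ)) (c : WithTop ℤ) := by
    rw [key _ (zpow_ne_zero _ hu0), IsDiscVal_zpow hvL hu]
  have h3 : φ (u ^ k) * φ (u ^ (-k)) = 1 := by
    rw [← map_mul, ← zpow_add₀ hu0, add_neg_cancel, zpow_zero, map_one]
  have h4 := hv𝓛.map_mul (φ (u ^ k)) (φ (u ^ (-k)))
  rw [h3, hv𝓛.v_one, h1, h2, ← WithTop.coe_min, ← WithTop.coe_min, ← WithTop.coe_add] at h4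
  have h5 : (0 : ℤ) = min k c + min (-k) c := by exact_mod_cast h4
  omega

lemma v_zero_top (hvL : IsDiscVal vL) (hv𝓛 : IsDiscVal v𝓛) :
    ∀ j, j ≤ d - 1 → tw.v j 0 = ⊤ := by
  have hDle : ∀ j' (h' : j' ≤ d - 1) j, j < j' → Dmin tw j' h' ≤ tw.v j 0 := by
    intro j'
    induction j' with
    | zero => intro h' j hj; omega
    | succ j' ih =>
        intro h' j hj
        show min (Dmin tw j' (by omega)) (tw.v j' 0) ≤ _
        rcases Nat.lt_or_ge j j' with h | h
        · exact le_trans (min_le_left _ _) (ih (by omega) j h)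
        · have : j = j' := by omega
          subst this
          exact min_le_right _ _
  intro j hj
  rcases Nat.lt_or_ge j (d-1) with h | h
  · have := hDle (d-1) le_rfl j h
    rw [Dmin_top tw hvL hv𝓛] at this
    exact top_le_iff.mp this
  · have : j = d - 1 := by omega
    subst this
    have h0 := tw.v_top 0
    rw [map_zero, hv𝓛.v_zero] at h0
    exact h0.symm

lemma v_ne_top (hvL : IsDiscVal vL) :
    ∀ j, j ≤ d - 1 → ∀ x : tw.F j, x ≠ 0 → tw.v j x ≠ ⊤ := by
  intro j
  induction j with
  | zero =>
      intro h x hx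
      rw [v_base' tw x]
      intro htop
      exact hx (by
        have := (hvL.eq_top_iff _).mp htop
        have h2 := congrArg tw.baseEquiv this
        rwa [RingEquiv.apply_symm_apply, map_zero] at h2)
  | succ j ih =>
      intro h x hx
      have hlt : j < d - 1 := by omega
      obtain ⟨i, hi⟩ := exists_coeff_ne_zero (tw.step j hlt) hx
      have hle := vF_le (tw.step j hlt) hx i
      intro htop
      rw [htop] at hle
      exact ih (by omega) _ hi (top_le_iff.mp hle)

lemma cc_succ (j : ℕ) (h : j + 1 ≤ d - 1) (hj : j ≤ d - 1) (x : tw.F (j+1)) :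
    tw.cc (j+1) h x = tw.cc j hj ((tw.step j (by omega)).coeff 0 x) := rfl

lemma main_P (hvL : IsDiscVal vL) (hv𝓛 : IsDiscVal v𝓛) :
    ∀ j (h : j ≤ d - 1) (x : tw.F j), x ≠ 0 →
      ∃ (a : L) (g : L → tw.F j), vL a = tw.v j x ∧
        (∀ b, tw.v j (g b) = vL b) ∧ (∀ b, tw.cc j h (x * g b) = a * b) := by
  intro j
  induction j with
  | zero =>
      intro h x hx
      refine ⟨tw.baseEquiv.symm x, fun b => tw.baseEquiv b, (v_base' tw x).symm,
        fun b => tw.v_base b, fun b => ?_⟩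
      show tw.baseEquiv.symm (x * tw.baseEquiv b) = _
      rw [map_mul, RingEquiv.symm_apply_apply]
  | succ j ih =>
      intro h x hx
      have hj : j ≤ d - 1 := by omega
      have hlt : j < d - 1 := by omega
      set st := tw.step j hlt with hst
      have hxtop : tw.v (j+1) x ≠ ⊤ := v_ne_top tw hvL (j+1) h x hx
      obtain ⟨i, hi'⟩ := (st.v_isLeast x hx).1
      have hi : tw.v j (st.coeff i x) = tw.v (j+1) x := hi'
      set x' := st.coeff i x with hx'def
      have hx' : x' ≠ 0 := by
        intro h0
        rw [h0, v_zero_top tw hvL hv𝓛 j hj] at hi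
        exact hxtop hi.symm
      obtain ⟨a, g', ha, hgv, hgc⟩ := ih hj x' hx'
      refine ⟨a, fun b => st.emb (g' b) * st.T ^ (-i), by rw [ha, hi], fun b => ?_, fun b => ?_⟩
      · -- valuation of g b
        by_cases hb : b = 0
        · subst hb
          show tw.v (j+1) (st.emb (g' 0) * st.T ^ (-i)) = vL 0
          have : g' 0 = 0 := by
            have h0 := hgv 0
            rw [hvL.v_zero] at h0
            by_contra hne
            exact v_ne_top tw hvL j hj _ hne h0
          rw [this, map_zero, zero_mul, v_zero_top tw hvL hv𝓛 (j+1) h, hvL.v_zero]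
        · have hbtop : tw.v j (g' b) ≠ ⊤ := by
            rw [hgv b]
            exact fun h0 => hb ((hvL.eq_top_iff b).mp h0)
          have := v_single st (v_zero_top tw hvL hv𝓛 j hj) hbtop
            (fun m => coeff_emb_mul_zpow st (g' b) (-i) m)
          rw [this, hgv b]
      · -- constant coefficient
        rw [cc_succ tw j h hj]
        have hcoeff : (tw.step j (by omega)).coeff 0 (x * (st.emb (g' b) * st.T ^ (-i)))
            = x' * g' b := by
          show st.coeff 0 (x * (st.emb (g' b) * st.T ^ (-i))) = x' * g' b
          rw [← mul_assoc, coeff_mul_zpow st, zero_sub, neg_neg, mul_comm x (st.emb (g' b)),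
            st.coeff_emb_mul, mul_comm]
        rw [hcoeff, hgc b]

lemma v_le_cc (hvL : IsDiscVal vL) :
    ∀ j (h : j ≤ d - 1) (x : tw.F j), tw.v j x ≤ vL (tw.cc j h x) := by
  intro j
  induction j with
  | zero =>
      intro h x
      exact le_of_eq (v_base' tw x)
  | succ j ih =>
      intro h x
      have hj : j ≤ d - 1 := by omega
      have hlt : j < d - 1 := by omega
      by_cases hx : x = 0
      · subst hx
        rw [cc_zero tw (j+1) h, hvL.v_zero]
        exact le_top
      · rw [cc_succ tw j h hj]
        exact le_trans (vF_le (tw.step j hlt) hx 0) (ih hj _)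

lemma top_v_le_cc (hvL : IsDiscVal vL) (z : 𝓛) :
    v𝓛 z ≤ vL (tw.constCoeff z) := by
  rw [v_top' tw z]
  exact v_le_cc tw hvL (d-1) le_rfl _

lemma top_P (hvL : IsDiscVal vL) (hv𝓛 : IsDiscVal v𝓛) {x : 𝓛} (hx : x ≠ 0) :
    ∃ (a : L) (g : L → 𝓛), vL a = v𝓛 x ∧
      (∀ b, v𝓛 (g b) = vL b) ∧ (∀ b, tw.constCoeff (x * g b) = a * b) := by
  have hx0 : tw.topEquiv.symm x ≠ 0 := by
    intro h0
    exact hx (by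
      have := congrArg tw.topEquiv h0
      rwa [RingEquiv.apply_symm_apply, map_zero] at this)
  obtain ⟨a, g', ha, hgv, hgc⟩ := main_P tw hvL hv𝓛 (d-1) le_rfl _ hx0
  refine ⟨a, fun b => tw.topEquiv (g' b), ?_, fun b => ?_, fun b => ?_⟩
  · rw [ha, v_top' tw x]
  · rw [tw.v_top, hgv b]
  · show tw.cc (d-1) le_rfl (tw.topEquiv.symm (x * tw.topEquiv (g' b))) = _
    rw [map_mul, RingEquiv.symm_apply_apply]
    exact hgc b

end TowerAux
end TowerAux

/-- Let `𝓛 = L{{T_1}}…{{T_{d−1}}}` with `L/S` a finite extension of local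
fields (`S` a finite extension of `ℚ_p`, `p > 2`, with ring of integers `C`).  Then
`R_{𝓛,1} = { x ∈ 𝓛 : v_𝓛(x) ≥ −v_L(D(L/S)) − ⌊v_L(p)/(p−1)⌋ − 1 }`,
where `R_{𝓛,1} = { x : 𝕋_{𝓛/S}(x · μ_{𝓛,1}) ⊆ C }` is the dual of
`μ_{𝓛,1} = { y : v_𝓛(y) ≥ ⌊v_𝓛(p)/(p−1)⌋ + 1 }` under the generalized trace
`𝕋_{𝓛/S} = Tr_{L/S} ∘ c_{𝓛/L}`, and `D(L/S)` is the different of `L/S` (its valuation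
`dLS = v_L(D(L/S))` being characterized by trace duality). -/
theorem R1_description
    (p : ℕ) (hp : p.Prime) (hp2 : 2 < p) (d : ℕ) (hd : 1 ≤ d)
    (S : Type) [Field S] (vS : S → WithTop ℤ) (hvS : IsDiscVal vS)
    (L : Type) [Field L] [Algebra S L] [FiniteDimensional S L]
    (vL : L → WithTop ℤ) (hvL : IsDiscVal vL)
    (eSL : ℕ) (heSL : 0 < eSL) (hcompat : ∀ x : S, vL (algebraMap S L x) = eSL • vS x)
    -- `𝓛 = L{{T_1}}…{{T_{d−1}}}`:
    (𝓛 : Type) [Field 𝓛] (v𝓛 : 𝓛 → WithTop ℤ) (hv𝓛 : IsDiscVal v𝓛)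
    (tw : AmpleTower d L vL 𝓛 v𝓛)
    -- `v_L(p)`:
    (eL : ℕ) (heL : vL (p : L) = (eL : ℤ))
    -- `v_L(D(L/S))`, characterized by trace duality (the inverse different is the dual of
    -- `O_L` with respect to the trace pairing):
    (dLS : ℤ)
    (hdLS : ∀ x : L,
      (∀ y : L, 0 ≤ vL y → Algebra.trace S L (x * y) ∈ hvS.subring) ↔
      (-dLS : WithTop ℤ) ≤ vL x) :
    {x : 𝓛 | ∀ y : 𝓛,
        (((eL : ℤ) / ((p : ℤ) - 1) + 1 : ℤ) : WithTop ℤ) ≤ v𝓛 y →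
        Algebra.trace S L (tw.constCoeff (x * y)) ∈ hvS.subring}
      = {x : 𝓛 | ((-dLS - (eL : ℤ) / ((p : ℤ) - 1) - 1 : ℤ) : WithTop ℤ) ≤ v𝓛 x} := by
  ext x
  simp only [Set.mem_setOf_eq]
  set m : ℤ := (eL : ℤ) / ((p : ℤ) - 1) with hm
  constructor
  · intro hx
    by_cases hx0 : x = 0
    · rw [hx0, hv𝓛.v_zero]; exact le_top
    obtain ⟨a, g, ha, hgv, hgc⟩ := TowerAux.top_P tw hvL hv𝓛 hx0
    obtain ⟨u, hu⟩ := hvL.exists_uniformizer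
    have hu0 : u ≠ 0 := by
      intro h
      rw [h, hvL.v_zero] at hu
      exact (by simp : (⊤ : WithTop ℤ) ≠ 1) hu
    have key : (-dLS : WithTop ℤ) ≤ vL (a * u ^ (m + 1)) := by
      refine (hdLS (a * u ^ (m + 1))).mp ?_
      intro y hy
      by_cases hy0 : y = 0
      · rw [hy0, mul_zero, map_zero]; exact zero_mem _
      · have h1 : (((m + 1 : ℤ)) : WithTop ℤ) ≤ v𝓛 (g (u ^ (m + 1) * y)) := by
          rw [hgv, hvL.map_mul, IsDiscVal_zpow hvL hu]
          exact le_add_of_nonneg_right hy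
        have h2 := hx (g (u ^ (m + 1) * y)) h1
        rw [hgc, ← mul_assoc] at h2
        exact h2
    rw [hvL.map_mul, IsDiscVal_zpow hvL hu] at key
    by_cases htop : vL a = ⊤
    · rw [← ha, htop]; exact le_top
    · obtain ⟨t, ht⟩ := WithTop.ne_top_iff_exists.mp htop
      rw [← ha, ← ht]
      rw [← ht] at key
      have hk : -dLS ≤ t + (m + 1) := by exact_mod_cast key
      exact_mod_cast (by omega : -dLS - m - 1 ≤ t)
  · intro hx y hy
    have hsum : ((-dLS : ℤ) : WithTop ℤ) ≤ v𝓛 (x * y) := by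
      rw [hv𝓛.map_mul]
      have hsplit : ((-dLS : ℤ) : WithTop ℤ)
          = ((-dLS - m - 1 : ℤ) : WithTop ℤ) + ((m + 1 : ℤ) : WithTop ℤ) := by
        rw [← WithTop.coe_add]
        norm_cast
        ring
      rw [hsplit]
      exact add_le_add hx hy
    have h2 : (-dLS : WithTop ℤ) ≤ vL (tw.constCoeff (x * y)) := by
      refine le_trans ?_ (TowerAux.top_v_le_cc tw hvL (x * y))
      exact_mod_cast hsum
    have h3 := (hdLS _).mpr h2 1 (le_of_eq (hvL.v_one).symm)
    rwa [mul_one] at h3
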